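/- Let p be an odd prime with p ≥ 5 and a ∈ F_p*. Then h_p(1,a) = 3 if and only if a ≡ 2 (mod p) or a ≡ (p+1)/2 (mod p). -/

import Mathlib

/-- The height `h_p(⟨1,a⟩) = min_{k=1}^{p-1} (k + (k·a mod p))`. -/
noncomputable def heightLine (p : ℕ) (a : ZMod p) : ℕ :=
  sInf {n | ∃ k : ℕ, 1 ≤ k ∧ k ≤ p - 1 ∧ n = k + ((k : ZMod p) * a).val}

theorem stmt_7 (p : ℕ) (hp : p.Prime) (hodd : Odd p) (hp5 : 5 ≤ p)
    (a : ZMod p) (ha : a ≠ 0) :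
    heightLine p a = 3 ↔ a = 2 ∨ a = (((p + 1) / 2 : ℕ) : ZMod p) := by
  haveI : Fact p.Prime := ⟨hp⟩
  haveI : NeZero p := ⟨hp.ne_zero⟩
  set S : Set ℕ := {n | ∃ k : ℕ, 1 ≤ k ∧ k ≤ p - 1 ∧ n = k + ((k : ZMod p) * a).val}
    with hS
  have h2p : 2 ∣ p + 1 := by
    obtain ⟨m, hm⟩ := hodd; omega
  have hc2 : (2 : ZMod p) * (((p + 1) / 2 : ℕ) : ZMod p) = 1 := by
    have : ((2 * ((p + 1) / 2) : ℕ) : ZMod p) = ((p + 1 : ℕ) : ZMod p) := by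
      rw [Nat.mul_div_cancel' h2p]
    push_cast at this
    rw [ZMod.natCast_self] at this
    linear_combination this
  have h2ne : (2 : ZMod p) ≠ 0 := by
    have : ((2 : ℕ) : ZMod p) ≠ 0 := by
      rw [Ne, ZMod.natCast_eq_zero_iff]
      intro h; have := Nat.le_of_dvd (by norm_num) h; omega
    simpa using this
  have h3ne : (3 : ZMod p) ≠ 0 := by
    have : ((3 : ℕ) : ZMod p) ≠ 0 := by
      rw [Ne, ZMod.natCast_eq_zero_iff]
      intro h; have := Nat.le_of_dvd (by norm_num) h; omega
    simpa using this
  have hval2 : (2 : ZMod p).val = 2 := by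
    have : ((2 : ℕ) : ZMod p).val = 2 % p := ZMod.val_natCast p 2
    rw [Nat.mod_eq_of_lt (by omega)] at this
    simpa using this
  have hval1 : (1 : ZMod p).val = 1 := ZMod.val_one p
  have hane1 : a = 2 ∨ a = (((p + 1) / 2 : ℕ) : ZMod p) → a ≠ 1 := by
    rintro (rfl | rfl) h
    · have : ((2 : ℕ) : ZMod p) = ((1 : ℕ) : ZMod p) := by push_cast; exact h
      have := (ZMod.natCast_eq_natCast_iff' 2 1 p).mp this
      rw [Nat.mod_eq_of_lt (by omega), Nat.mod_eq_of_lt (by omega)] at this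
      omega
    · rw [h, mul_one] at hc2
      have : ((2 : ℕ) : ZMod p) = ((1 : ℕ) : ZMod p) := by push_cast; exact hc2
      have := (ZMod.natCast_eq_natCast_iff' 2 1 p).mp this
      rw [Nat.mod_eq_of_lt (by omega), Nat.mod_eq_of_lt (by omega)] at this
      omega
  constructor
  · intro h
    have hne : S.Nonempty := by
      by_contra hemp
      rw [Set.not_nonempty_iff_eq_empty] at hemp
      rw [heightLine, ← hS, hemp, Nat.sInf_empty] at h
      omega
    have h3 : 3 ∈ S := by
      have := Nat.sInf_mem hne
      rw [show sInf S = heightLine p a from rfl, h] at this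
      exact this
    obtain ⟨k, hk1, hk2, hk3⟩ := h3
    have hv : ((k : ZMod p) * a).val = 3 - k := by omega
    have hk3' : k ≤ 3 := by omega
    interval_cases k
    · -- k = 1 : impossible since then val = 2 means a = 2
      left
      rw [Nat.cast_one, one_mul] at hv
      have := congrArg (Nat.cast : ℕ → ZMod p) hv
      rw [ZMod.natCast_val, ZMod.cast_id] at this
      simpa using this
    · -- k = 2 : 2a = 1
      right
      have : ((2 : ℕ) : ZMod p) * a = 1 := by
        have := congrArg (Nat.cast : ℕ → ZMod p) hv
        rw [ZMod.natCast_val, ZMod.cast_id] at this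
        simpa using this
      push_cast at this
      exact (mul_left_cancel₀ h2ne (hc2.trans this.symm)).symm
    · -- k = 3 : 3a = 0, contradiction
      exfalso
      push_cast at hv
      have hv0 : (3 : ZMod p) * a = 0 := (ZMod.val_eq_zero _).mp (by omega)
      rcases mul_eq_zero.mp hv0 with h | h
      · exact h3ne h
      · exact ha h
  · intro hor
    have hane1' := hane1 hor
    have h3 : 3 ∈ S := by
      rcases hor with rfl | rfl
      · exact ⟨1, le_refl 1, by omega, by rw [Nat.cast_one, one_mul, hval2]⟩
      · exact ⟨2, by omega, by omega, by
          rw [Nat.cast_ofNat, hc2, hval1]⟩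
    have hlb : ∀ n ∈ S, 3 ≤ n := by
      rintro n ⟨k, hk1, hk2, rfl⟩
      by_contra hlt
      push_neg at hlt
      have hv : ((k : ZMod p) * a).val = 0 ∨
          (k = 1 ∧ ((k : ZMod p) * a).val = 1) := by omega
      have hk2' : k ≤ 2 := by omega
      interval_cases k
      · rcases hv with hv | ⟨_, hv⟩
        · rw [Nat.cast_one, one_mul, ZMod.val_eq_zero] at hv
          exact ha hv
        · have := congrArg (Nat.cast : ℕ → ZMod p) hv
          rw [ZMod.natCast_val, ZMod.cast_id, Nat.cast_one, one_mul] at this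
          exact hane1' (by simpa using this)
      · rcases hv with hv | ⟨h1, _⟩
        · rw [ZMod.val_eq_zero] at hv
          rcases mul_eq_zero.mp hv with h | h
          · exact h2ne (by simpa using h)
          · exact ha h
        · omega
    have := le_antisymm (Nat.sInf_le h3) (le_csInf ⟨3, h3⟩ hlb)
    exact this
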